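/- Let k be a field of characteristic 2 and let A = k[x,y,z,w]/(xy, xz, xw, y^2, z^2, w^2, x^3 + yzw). Then every nonzero linear form ℓ in A_1 is a zero divisor on A; more precisely, for every nonzero ℓ ∈ A_1 there exists a nonzero linear form ℓ' ∈ A_1 with ℓℓ' = 0 in A. -/
import Mathlib


open MvPolynomial

private lemma aux_degree_one {m : Fin 4 →₀ ℕ} (hm : m.degree = 1) :
    ∃ i, m = Finsupp.single i 1 := by
  classical
  have hsum : ∑ i : Fin 4, m i = 1 := by
    rw [← hm, Finsupp.degree]
    exact (Finset.sum_subset (Finset.subset_univ _) (by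
      intro x _ hx
      simpa using (Finsupp.notMem_support_iff.mp hx))).symm
  have : ∃ i : Fin 4, m i ≠ 0 := by
    by_contra h
    push_neg at h
    simp [h] at hsum
  obtain ⟨i, hi⟩ := this
  refine ⟨i, ?_⟩
  have hrest : m i + ∑ j ∈ Finset.univ.erase i, m j = 1 := by
    rw [Finset.add_sum_erase _ _ (Finset.mem_univ i)]; exact hsum
  have hmi : m i = 1 := by omega
  have hz : ∀ j ∈ Finset.univ.erase i, m j = 0 := by
    intro j hj
    have : ∑ j ∈ Finset.univ.erase i, m j = 0 := by omega
    exact Finset.sum_eq_zero_iff.mp this j hj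
  ext j
  rcases eq_or_ne j i with rfl | hji
  · simp [hmi]
  · have := hz j (Finset.mem_erase.mpr ⟨hji, Finset.mem_univ _⟩)
    simp [Finsupp.single_apply, hji.symm, this]

private lemma aux_decomp {k : Type*} [CommRing k] (p : MvPolynomial (Fin 4) k)
    (hp : p.IsHomogeneous 1) :
    p = ∑ i : Fin 4, C (coeff (Finsupp.single i 1) p) * X i := by
  classical
  apply MvPolynomial.ext
  intro m
  rw [coeff_sum]
  simp only [coeff_C_mul, coeff_X']
  by_cases hm : ∃ i, m = Finsupp.single i 1
  · obtain ⟨i, rfl⟩ := hm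
    rw [Finset.sum_eq_single i]
    · simp
    · intro j _ hj
      simp [Finsupp.single_left_injective, (Finsupp.single_left_injective one_ne_zero).ne hj]
    · simp
  · push_neg at hm
    have h1 : coeff m p = 0 := by
      apply hp.coeff_eq_zero
      intro hd
      exact hm _ (aux_degree_one hd).choose_spec
    rw [h1]
    symm
    apply Finset.sum_eq_zero
    intro j _
    rw [if_neg (fun h => hm j h.symm), mul_zero]

private lemma aux_not_mem (k : Type*) [Field k] (I : Ideal (MvPolynomial (Fin 4) k))
    (hI : I = Ideal.span {X 0 * X 1, X 0 * X 2, X 0 * X 3,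
      X 1 ^ 2, X 2 ^ 2, X 3 ^ 2, X 0 ^ 3 + X 1 * X 2 * X 3})
    (f : Fin 4 → DualNumber k) (hf : ∀ i j, f i * f j = 0)
    (p : MvPolynomial (Fin 4) k) (hp : aeval f p ≠ 0) :
    Ideal.Quotient.mk I p ≠ 0 := by
  intro h0
  rw [Ideal.Quotient.eq_zero_iff_mem] at h0
  have hle : I ≤ RingHom.ker (aeval f : MvPolynomial (Fin 4) k →ₐ[k] DualNumber k) := by
    rw [hI, Ideal.span_le]
    intro g hg
    simp only [Set.mem_insert_iff, Set.mem_singleton_iff] at hg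
    rcases hg with rfl | rfl | rfl | rfl | rfl | rfl | rfl <;>
      simp [RingHom.mem_ker, pow_succ, pow_zero, one_mul, hf, mul_assoc]
  exact hp (hle h0)

private lemma aux_eval_ne {k : Type*} [Field k] (b c d : k)
    (f : Fin 4 → DualNumber k) (_hf0 : f 0 = 0)
    (hval : b • TrivSqZeroExt.snd (f 1) + c • TrivSqZeroExt.snd (f 2)
      + d • TrivSqZeroExt.snd (f 3) ≠ 0) :
    (aeval f) (C b * X 1 + C c * X 2 + C d * X 3) ≠ 0 := by
  intro h
  have := congrArg (TrivSqZeroExt.snd) h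
  simp only [map_add, map_mul, aeval_C, aeval_X, TrivSqZeroExt.snd_mul,
    TrivSqZeroExt.snd_zero, TrivSqZeroExt.fst_inl, TrivSqZeroExt.snd_inl,
    TrivSqZeroExt.algebraMap_eq_inl', smul_zero, add_zero, MulOpposite.op_zero,
    zero_smul, smul_eq_mul] at this
  exact hval (by simpa using this)

/-- over a field of characteristic 2, in
`A = k[x,y,z,w]/(xy, xz, xw, y², z², w², x³ + yzw)` every nonzero linear form
is annihilated by some nonzero linear form. -/
theorem stmt_0 (k : Type*) [Field k] [CharP k 2]
    (I : Ideal (MvPolynomial (Fin 4) k))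
    (hI : I = Ideal.span {X 0 * X 1, X 0 * X 2, X 0 * X 3,
      X 1 ^ 2, X 2 ^ 2, X 3 ^ 2, X 0 ^ 3 + X 1 * X 2 * X 3}) :
    ∀ ℓ : MvPolynomial (Fin 4) k, ℓ.IsHomogeneous 1 →
      Ideal.Quotient.mk I ℓ ≠ 0 →
      ∃ ℓ' : MvPolynomial (Fin 4) k, ℓ'.IsHomogeneous 1 ∧
        Ideal.Quotient.mk I ℓ' ≠ 0 ∧ Ideal.Quotient.mk I (ℓ * ℓ') = 0 := by
  classical
  intro ℓ hℓ hℓ0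
  set a := coeff (Finsupp.single (0 : Fin 4) 1) ℓ with ha
  set b := coeff (Finsupp.single (1 : Fin 4) 1) ℓ with hb
  set c := coeff (Finsupp.single (2 : Fin 4) 1) ℓ with hc
  set d := coeff (Finsupp.single (3 : Fin 4) 1) ℓ with hd
  have hdec : ℓ = C a * X 0 + C b * X 1 + C c * X 2 + C d * X 3 := by
    have := aux_decomp ℓ hℓ
    rwa [Fin.sum_univ_four] at this
  have hf1 : ∀ i j : Fin 4, (![0, DualNumber.eps, 0, 0] : Fin 4 → DualNumber k) i *
      (![0, DualNumber.eps, 0, 0] : Fin 4 → DualNumber k) j = 0 := by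
    intro i j; fin_cases i <;> fin_cases j <;> simp [DualNumber.eps_mul_eps]
  have hf2 : ∀ i j : Fin 4, (![0, 0, DualNumber.eps, 0] : Fin 4 → DualNumber k) i *
      (![0, 0, DualNumber.eps, 0] : Fin 4 → DualNumber k) j = 0 := by
    intro i j; fin_cases i <;> fin_cases j <;> simp [DualNumber.eps_mul_eps]
  have hf3 : ∀ i j : Fin 4, (![0, 0, 0, DualNumber.eps] : Fin 4 → DualNumber k) i *
      (![0, 0, 0, DualNumber.eps] : Fin 4 → DualNumber k) j = 0 := by
    intro i j; fin_cases i <;> fin_cases j <;> simp [DualNumber.eps_mul_eps]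
  by_cases hbcd : b = 0 ∧ c = 0 ∧ d = 0
  · -- ℓ = C a * X 0 ; take ℓ' = X 1
    obtain ⟨h1, h2, h3⟩ := hbcd
    refine ⟨X 1, isHomogeneous_X _ _, ?_, ?_⟩
    · refine aux_not_mem k I hI ![0, DualNumber.eps, 0, 0] hf1 _ ?_
      rw [aeval_X]
      intro h
      have := congrArg (TrivSqZeroExt.snd) h
      simp [DualNumber.snd_eps] at this
    · rw [Ideal.Quotient.eq_zero_iff_mem]
      have : ℓ * X 1 = C a * (X 0 * X 1) := by
        rw [hdec, h1, h2, h3]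
        simp only [map_zero, zero_mul, add_zero]
        ring
      rw [this, hI]
      exact Ideal.mul_mem_left _ _ (Ideal.subset_span (Set.mem_insert _ _))
  · -- take ℓ' = C b * X 1 + C c * X 2 + C d * X 3
    refine ⟨C b * X 1 + C c * X 2 + C d * X 3,
      ((isHomogeneous_C_mul_X b 1).add (isHomogeneous_C_mul_X c 2)).add
        (isHomogeneous_C_mul_X d 3), ?_, ?_⟩
    · -- nonzero mod I
      have hcase : b ≠ 0 ∨ c ≠ 0 ∨ d ≠ 0 := by tauto
      rcases hcase with hne | hne | hne
      · refine aux_not_mem k I hI ![0, DualNumber.eps, 0, 0] hf1 _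
          (aux_eval_ne b c d _ (by simp) ?_)
        simpa [DualNumber.snd_eps] using hne
      · refine aux_not_mem k I hI ![0, 0, DualNumber.eps, 0] hf2 _
          (aux_eval_ne b c d _ (by simp) ?_)
        simpa [DualNumber.snd_eps] using hne
      · refine aux_not_mem k I hI ![0, 0, 0, DualNumber.eps] hf3 _
          (aux_eval_ne b c d _ (by simp) ?_)
        simpa [DualNumber.snd_eps] using hne
    · -- product is zero mod I
      rw [Ideal.Quotient.eq_zero_iff_mem]
      have h2 : (2 : MvPolynomial (Fin 4) k) = 0 := by
        have := CharP.cast_eq_zero (MvPolynomial (Fin 4) k) 2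
        exact_mod_cast this
      have key : ℓ * (C b * X 1 + C c * X 2 + C d * X 3) =
          C a * C b * (X 0 * X 1) + C a * C c * (X 0 * X 2) + C a * C d * (X 0 * X 3)
          + C b * C b * (X 1 ^ 2) + C c * C c * (X 2 ^ 2) + C d * C d * (X 3 ^ 2) := by
        rw [hdec]
        linear_combination (C b * C c * X 1 * X 2 + C b * C d * X 1 * X 3
          + C c * C d * X 2 * X 3) * h2
      rw [key, hI]
      have m1 : (X 0 * X 1 : MvPolynomial (Fin 4) k) ∈ ({X 0 * X 1, X 0 * X 2, X 0 * X 3,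
          X 1 ^ 2, X 2 ^ 2, X 3 ^ 2, X 0 ^ 3 + X 1 * X 2 * X 3} :
          Set (MvPolynomial (Fin 4) k)) := Set.mem_insert _ _
      have m2 : (X 0 * X 2 : MvPolynomial (Fin 4) k) ∈ ({X 0 * X 1, X 0 * X 2, X 0 * X 3,
          X 1 ^ 2, X 2 ^ 2, X 3 ^ 2, X 0 ^ 3 + X 1 * X 2 * X 3} :
          Set (MvPolynomial (Fin 4) k)) :=
        Set.mem_insert_of_mem _ (Set.mem_insert _ _)
      have m3 : (X 0 * X 3 : MvPolynomial (Fin 4) k) ∈ ({X 0 * X 1, X 0 * X 2, X 0 * X 3,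
          X 1 ^ 2, X 2 ^ 2, X 3 ^ 2, X 0 ^ 3 + X 1 * X 2 * X 3} :
          Set (MvPolynomial (Fin 4) k)) :=
        Set.mem_insert_of_mem _ (Set.mem_insert_of_mem _ (Set.mem_insert _ _))
      have m4 : (X 1 ^ 2 : MvPolynomial (Fin 4) k) ∈ ({X 0 * X 1, X 0 * X 2, X 0 * X 3,
          X 1 ^ 2, X 2 ^ 2, X 3 ^ 2, X 0 ^ 3 + X 1 * X 2 * X 3} :
          Set (MvPolynomial (Fin 4) k)) :=
        Set.mem_insert_of_mem _ (Set.mem_insert_of_mem _ (Set.mem_insert_of_mem _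
          (Set.mem_insert _ _)))
      have m5 : (X 2 ^ 2 : MvPolynomial (Fin 4) k) ∈ ({X 0 * X 1, X 0 * X 2, X 0 * X 3,
          X 1 ^ 2, X 2 ^ 2, X 3 ^ 2, X 0 ^ 3 + X 1 * X 2 * X 3} :
          Set (MvPolynomial (Fin 4) k)) :=
        Set.mem_insert_of_mem _ (Set.mem_insert_of_mem _ (Set.mem_insert_of_mem _
          (Set.mem_insert_of_mem _ (Set.mem_insert _ _))))
      have m6 : (X 3 ^ 2 : MvPolynomial (Fin 4) k) ∈ ({X 0 * X 1, X 0 * X 2, X 0 * X 3,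
          X 1 ^ 2, X 2 ^ 2, X 3 ^ 2, X 0 ^ 3 + X 1 * X 2 * X 3} :
          Set (MvPolynomial (Fin 4) k)) :=
        Set.mem_insert_of_mem _ (Set.mem_insert_of_mem _ (Set.mem_insert_of_mem _
          (Set.mem_insert_of_mem _ (Set.mem_insert_of_mem _ (Set.mem_insert _ _)))))
      exact add_mem (add_mem (add_mem (add_mem (add_mem
        (Ideal.mul_mem_left _ _ (Ideal.subset_span m1))
        (Ideal.mul_mem_left _ _ (Ideal.subset_span m2)))
        (Ideal.mul_mem_left _ _ (Ideal.subset_span m3)))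
        (Ideal.mul_mem_left _ _ (Ideal.subset_span m4)))
        (Ideal.mul_mem_left _ _ (Ideal.subset_span m5)))
        (Ideal.mul_mem_left _ _ (Ideal.subset_span m6))
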